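/- Quantitative FMC types are not all inhabited: there exists a computation type τ such that no term M satisfies Γ ⊢_w M : τ for any context Γ with only the specified type assignment; concretely, the type ε ⇒ [ε⇒ε, ε⇒[ε⇒ε]] is uninhabited in the empty context. -/

import Mathlib

/-- Terms of the Functional Machine Calculus. -/
inductive Tm : Type
| var : ℕ → Tm
| pop : ℕ → ℕ → Tm → Tm      -- a<x>.M
| push : Tm → ℕ → Tm → Tm    -- [N]a.M
| skip : Tm
| seq : Tm → Tm → Tm
deriving DecidableEq

open Tm

/-- Free variables. -/
def fv : Tm → Finset ℕ
| Tm.var y => {y}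
| Tm.pop _ y M => (fv M).erase y
| Tm.push N _ M => fv N ∪ fv M
| Tm.skip => ∅
| Tm.seq M N => fv M ∪ fv N

/-- Substitution {N/x}M. -/
def subst (x : ℕ) (N : Tm) : Tm → Tm
| Tm.var y => if y = x then N else Tm.var y
| Tm.pop a y M => if y = x then Tm.pop a y M else Tm.pop a y (subst x N M)
| Tm.push P a M => Tm.push (subst x N P) a (subst x N M)
| Tm.skip => Tm.skip
| Tm.seq M P => Tm.seq (subst x N M) (subst x N P)

/-- A memory: a family of stacks of terms, indexed by locations. -/
abbrev Mem := ℕ → List Tm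

def emptyMem : Mem := fun _ => []

/-- Push a term onto stack `a` of a memory. -/
def pushMem (S : Mem) (a : ℕ) (N : Tm) : Mem := Function.update S a (N :: S a)

/-- Machine states: memory, term, continuation stack. -/
abbrev MState := Mem × Tm × List Tm

/-- Machine transitions. -/
inductive Step : MState → MState → Prop
| push : Step (S, Tm.push N a M, K) (pushMem S a N, M, K)
| pop  : Step (pushMem S a N, Tm.pop a x M, K) (S, subst x N M, K)
| seq  : Step (S, Tm.seq M N, K) (S, M, N :: K)
| skip : Step (S, Tm.skip, M :: K) (S, M, K)

/-- Runs, measured by the number of states traversed (length ≥ 1). -/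
inductive Runs : ℕ → MState → MState → Prop
| single : Runs 1 s s
| step : Step s t → Runs n t u → Runs (n+1) s u

/-- Quantified big-step evaluation. -/
inductive Eval : Mem → Tm → ℕ → Mem → Prop
| skip : Eval S Tm.skip 1 S
| seq : Eval R M m S → Eval S N n T → Eval R (Tm.seq M N) (m+n+1) T
| push : Eval (pushMem S a N) M n T → Eval S (Tm.push N a M) (n+1) T
| pop : Eval S (subst x N M) n T → Eval (pushMem S a N) (Tm.pop a x M) (n+1) T

/-- The six reduction rules. -/
inductive Rule : Tm → Tm → Prop
| beta : Rule (Tm.push N a (Tm.pop a x M)) (subst x N M)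
| passage : a ≠ b → x ∉ fv N →
    Rule (Tm.push N b (Tm.pop a x M)) (Tm.pop a x (Tm.push N b M))
| next : Rule (Tm.seq Tm.skip M) M
| prefixPop : x ∉ fv M → Rule (Tm.seq (Tm.pop a x N) M) (Tm.pop a x (Tm.seq N M))
| prefixPush : Rule (Tm.seq (Tm.push P a N) M) (Tm.push P a (Tm.seq N M))
| assoc : Rule (Tm.seq (Tm.seq P N) M) (Tm.seq P (Tm.seq N M))

/-- The beta rule alone. -/
inductive BetaRule : Tm → Tm → Prop
| beta : BetaRule (Tm.push N a (Tm.pop a x M)) (subst x N M)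

/-- The five non-beta reduction rules. -/
inductive NBRule : Tm → Tm → Prop
| passage : a ≠ b → x ∉ fv N →
    NBRule (Tm.push N b (Tm.pop a x M)) (Tm.pop a x (Tm.push N b M))
| next : NBRule (Tm.seq Tm.skip M) M
| prefixPop : x ∉ fv M → NBRule (Tm.seq (Tm.pop a x N) M) (Tm.pop a x (Tm.seq N M))
| prefixPush : NBRule (Tm.seq (Tm.push P a N) M) (Tm.push P a (Tm.seq N M))
| assoc : NBRule (Tm.seq (Tm.seq P N) M) (Tm.seq P (Tm.seq N M))

/-- Rules flagged by whether they are beta/next (weight-decreasing) steps. -/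
inductive RuleK : Bool → Tm → Tm → Prop
| beta : RuleK true (Tm.push N a (Tm.pop a x M)) (subst x N M)
| next : RuleK true (Tm.seq Tm.skip M) M
| passage : a ≠ b → x ∉ fv N →
    RuleK false (Tm.push N b (Tm.pop a x M)) (Tm.pop a x (Tm.push N b M))
| prefixPop : x ∉ fv M → RuleK false (Tm.seq (Tm.pop a x N) M) (Tm.pop a x (Tm.seq N M))
| prefixPush : RuleK false (Tm.seq (Tm.push P a N) M) (Tm.push P a (Tm.seq N M))
| assoc : RuleK false (Tm.seq (Tm.seq P N) M) (Tm.seq P (Tm.seq N M))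

/-- Closure of a rule relation under all contexts. -/
inductive Clo (r : Tm → Tm → Prop) : Tm → Tm → Prop
| base : r M N → Clo r M N
| pop : Clo r M N → Clo r (Tm.pop a x M) (Tm.pop a x N)
| pushBody : Clo r M N → Clo r (Tm.push P a M) (Tm.push P a N)
| pushArg : Clo r M N → Clo r (Tm.push M a P) (Tm.push N a P)
| seqL : Clo r M N → Clo r (Tm.seq M P) (Tm.seq N P)
| seqR : Clo r M N → Clo r (Tm.seq P M) (Tm.seq P N)

/-- Closure of a rule relation under spine contexts (no argument position). -/
inductive SpineClo (r : Tm → Tm → Prop) : Tm → Tm → Prop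
| base : r M N → SpineClo r M N
| pop : SpineClo r M N → SpineClo r (Tm.pop a x M) (Tm.pop a x N)
| pushBody : SpineClo r M N → SpineClo r (Tm.push P a M) (Tm.push P a N)
| seqL : SpineClo r M N → SpineClo r (Tm.seq M P) (Tm.seq N P)
| seqR : SpineClo r M N → SpineClo r (Tm.seq P M) (Tm.seq P N)

/-- Computation types: implications between memory types; a memory type assigns
to each location a vector (list) of collection types, a collection type being
a finite collection (list, read as multiset) of computation types. -/
inductive Ty : Type
| arr : (ℕ → List (List Ty)) → (ℕ → List (List Ty)) → Ty

abbrev Coll := List Ty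
abbrev MemT := ℕ → List Coll

def emptyMT : MemT := fun _ => []

/-- Prepend collection ι at location a of a memory type. -/
def consAt (a : ℕ) (ι : Coll) (κ : MemT) : MemT :=
  fun b => if b = a then ι :: κ b else κ b

/-- Typing contexts assign collection types to variables. -/
abbrev Ctx := ℕ → Coll

def emptyCtx : Ctx := fun _ => []
def ctxAdd (Γ Δ : Ctx) : Ctx := fun x => Γ x ++ Δ x
def singleCtx (x : ℕ) (ι : Coll) : Ctx := fun y => if y = x then ι else []

mutual
/-- Weak quantitative typing of terms, with weight. -/
inductive WT : Ctx → Tm → Ty → ℕ → Prop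
| var : WT (singleCtx x [t]) (Tm.var x) t 0
| abs : WT Γ M (Ty.arr κ μ) n →
    WT (Function.update Γ x []) (Tm.pop a x M) (Ty.arr (consAt a (Γ x) κ) μ) (n+1)
| app : WTC Γ N ι n → WT Δ M (Ty.arr (consAt a ι κ) μ) m →
    WT (ctxAdd Γ Δ) (Tm.push N a M) (Ty.arr κ μ) (n+m+1)
| unit : WT emptyCtx Tm.skip (Ty.arr ι ι) 1
| seq : WT Γ M (Ty.arr ι κ) n → WT Δ N (Ty.arr κ μ) m →
    WT (ctxAdd Γ Δ) (Tm.seq M N) (Ty.arr ι μ) (n+m+1)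
/-- Weak typing of a term by a collection type (the collection rule). -/
inductive WTC : Ctx → Tm → Coll → ℕ → Prop
| nil : WTC emptyCtx M [] 0
| cons : WT Γ M t n → WTC Δ M ts m → WTC (ctxAdd Γ Δ) M (t :: ts) (n+m)
end

mutual
/-- Strong quantitative typing of terms, with weight. -/
inductive StrT : Ctx → Tm → Ty → ℕ → Prop
| var : StrT (singleCtx x [t]) (Tm.var x) t 0
| abs : StrT Γ M (Ty.arr κ μ) n →
    StrT (Function.update Γ x []) (Tm.pop a x M) (Ty.arr (consAt a (Γ x) κ) μ) (n+1)
| app : StrTC Γ N ι n → StrT Δ M (Ty.arr (consAt a ι κ) μ) m → StrT E N t k →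
    StrT (ctxAdd (ctxAdd Γ Δ) E) (Tm.push N a M) (Ty.arr κ μ) (n+m+k+1)
| unit : StrT emptyCtx Tm.skip (Ty.arr ι ι) 1
| seq : StrT Γ M (Ty.arr ι κ) n → StrT Δ N (Ty.arr κ μ) m →
    StrT (ctxAdd Γ Δ) (Tm.seq M N) (Ty.arr ι μ) (n+m+1)
| weak : StrT Γ M t n → StrT (ctxAdd Γ Δ) M t n
/-- Strong typing of a term by a collection type. -/
inductive StrTC : Ctx → Tm → Coll → ℕ → Prop
| nil : StrTC emptyCtx M [] 0
| cons : StrT Γ M t n → StrTC Δ M ts m → StrTC (ctxAdd Γ Δ) M (t :: ts) (n+m)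
end

/-- Weak typing of a single stack. -/
inductive WStk : List Tm → List Coll → ℕ → Prop
| nil : WStk [] [] 0
| cons : WTC emptyCtx N ν n → WStk S ι m → WStk (N :: S) (ν :: ι) (n+m)

/-- Weak typing of a memory: each stack typed, with finitely-supported weights. -/
def WM (S : Mem) (ι : MemT) (n : ℕ) : Prop :=
  ∃ w : ℕ → ℕ, (∀ a, WStk (S a) (ι a) (w a)) ∧
    ∃ l : Finset ℕ, (∀ a ∉ l, w a = 0) ∧ n = ∑ a ∈ l, w a

/-- Weak typing of a continuation stack. -/
inductive WK : List Tm → Ty → ℕ → Prop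
| nil : WK [] (Ty.arr ι ι) 0
| cons : WT emptyCtx M (Ty.arr ι κ) n → WK K (Ty.arr κ μ) m →
    WK (M :: K) (Ty.arr ι μ) (n+m)

/-- Weak typing of a machine state, with type ε ⇒ μ⃗. -/
inductive WS : MState → MemT → ℕ → Prop
| mk : WM S ι n → WT emptyCtx M (Ty.arr ι κ) m → WK K (Ty.arr κ μ) k →
    WS (S, M, K) μ (n+m+k)

mutual
/-- Spine normal forms W. -/
inductive SpNF : Tm → Prop
| abs : SpNF M → SpNF (Tm.pop a x M)
| ofV : SpNFV M → SpNF M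
/-- Spine normal forms V (those that are not abstractions). -/
inductive SpNFV : Tm → Prop
| push : SpNFV M → SpNFV (Tm.push N a M)
| seq : SpNF M → SpNFV (Tm.seq (Tm.var x) M)
| var : SpNFV (Tm.var x)
| skip : SpNFV Tm.skip
end

mutual
/-- Normal forms of full reduction. -/
inductive NF : Tm → Prop
| abs : NF M → NF (Tm.pop a x M)
| ofV : NFV M → NF M
inductive NFV : Tm → Prop
| push : NF N → NFV M → NFV (Tm.push N a M)
| seq : NF M → NFV (Tm.seq (Tm.var x) M)
| var : NFV (Tm.var x)
| skip : NFV Tm.skip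
end

/-- A weak head context of applications, applied to a term. -/
def apps : List (Tm × ℕ) → Tm → Tm
| [], M => M
| (N, a) :: l, M => Tm.push N a (apps l M)

/-- The memory generated by executing a sequence of pushes. -/
def memOf (l : List (Tm × ℕ)) : Mem :=
  l.foldl (fun S p => pushMem S p.2 p.1) emptyMem

mutual
/-- Perpetual evaluation. -/
inductive Perp : Tm → Tm → Prop
| beta : Perp (apps l (subst x N M)) P → Perp N Q →
    Perp (apps l (Tm.push N a (Tm.pop a x M))) P
| passage : a ≠ b → x ∉ fv N →
    Perp (apps l (Tm.pop a x (Tm.push N b M))) P →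
    Perp (apps l (Tm.push N b (Tm.pop a x M))) P
| next : Perp (apps l M) P → Perp (apps l (Tm.seq Tm.skip M)) P
| prefixPop : x ∉ fv M → Perp (apps l (Tm.pop a x (Tm.seq N M))) P →
    Perp (apps l (Tm.seq (Tm.pop a x N) M)) P
| prefixPush : Perp (apps l (Tm.push Q a (Tm.seq N M))) P →
    Perp (apps l (Tm.seq (Tm.push Q a N) M)) P
| assoc : Perp (apps l (Tm.seq Q (Tm.seq N M))) P →
    Perp (apps l (Tm.seq (Tm.seq Q N) M)) P
| abs : Perp M P → Perp (Tm.pop a x M) (Tm.pop a x P)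
| unit : PerpL l l' → Perp (apps l Tm.skip) (apps l' Tm.skip)
| var : PerpL l l' → Perp (apps l (Tm.var x)) (apps l' (Tm.var x))
| seqvar : PerpL l l' → Perp M P →
    Perp (apps l (Tm.seq (Tm.var x) M)) (apps l' (Tm.seq (Tm.var x) P))
/-- Pointwise perpetual evaluation of weak head contexts. -/
inductive PerpL : List (Tm × ℕ) → List (Tm × ℕ) → Prop
| nil : PerpL [] []
| cons : Perp N P → PerpL l l' → PerpL ((N, a) :: l) ((P, a) :: l')
end

/-- Memories of dimension d (over a finite set of locations A). -/
def MemDim (A : Finset ℕ) : ℕ → Mem → Prop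
| 0 => fun S => ∀ a ∉ A, S a = []
| d+1 => fun S => (∀ a ∉ A, S a = []) ∧
    ∀ a ∈ A, d + 1 ≤ (S a).length ∧
      ∀ N ∈ S a, ∃ l, N = apps l Tm.skip ∧ MemDim A d (memOf l)

/-- Terms of dimension d: a sequence of pushes ending in skip generating a
memory of dimension d. -/
def TmDim (A : Finset ℕ) (d : ℕ) (M : Tm) : Prop :=
  ∃ l, M = apps l Tm.skip ∧ MemDim A d (memOf l)

/-- Simultaneous substitution by a substitution map. -/
def msubst (σ : ℕ → Tm) : Tm → Tm
| Tm.var y => σ y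
| Tm.pop a y M => Tm.pop a y (msubst (Function.update σ y (Tm.var y)) M)
| Tm.push N a M => Tm.push (msubst σ N) a (msubst σ M)
| Tm.skip => Tm.skip
| Tm.seq M N => Tm.seq (msubst σ M) (msubst σ N)
/-- The computation type ε ⇒ ε. -/
def tyE : Ty := Ty.arr emptyMT emptyMT

/-- The computation type ε ⇒ [ε⇒ε] (output: singleton collection at the
default location 0). -/
def tyE2 : Ty := Ty.arr emptyMT (fun a => if a = 0 then [[tyE]] else [])

/-- The uninhabited type ε ⇒ [ε⇒ε, ε⇒[ε⇒ε]]. -/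
def tyUninhabited : Ty :=
  Ty.arr emptyMT (fun a => if a = 0 then [[tyE, tyE2]] else [])

section NoInhab

open Function

/-! ### Context lemmas -/

lemma ctxAdd_eq_empty {Γ Δ : Ctx} (h : ctxAdd Γ Δ = emptyCtx) :
    Γ = emptyCtx ∧ Δ = emptyCtx := by
  have h1 : ∀ y, Γ y ++ Δ y = [] := fun y => congrFun h y
  exact ⟨funext fun y => (List.append_eq_nil_iff.mp (h1 y)).1,
         funext fun y => (List.append_eq_nil_iff.mp (h1 y)).2⟩

lemma WT.cast {Γ Γ' : Ctx} {M t t' n n'} (h : WT Γ M t n)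
    (hΓ : Γ = Γ') (ht : t = t') (hn : n = n') : WT Γ' M t' n' := by
  subst hΓ; subst ht; subst hn; exact h

lemma WTC.cast {Γ Γ' : Ctx} {M ι ι' n n'} (h : WTC Γ M ι n)
    (hΓ : Γ = Γ') (hι : ι = ι') (hn : n = n') : WTC Γ' M ι' n' := by
  subst hΓ; subst hι; subst hn; exact h

lemma wtc_nil_inv {Γ M n} (h : WTC Γ M [] n) : Γ = emptyCtx ∧ n = 0 := by
  cases h; exact ⟨rfl, rfl⟩

lemma wtc_cons_inv {Γ M t ts n} (h : WTC Γ M (t :: ts) n) :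
    ∃ Γ₁ Γ₂ n₁ n₂, Γ = ctxAdd Γ₁ Γ₂ ∧ n = n₁ + n₂ ∧ WT Γ₁ M t n₁ ∧ WTC Γ₂ M ts n₂ := by
  cases h with
  | cons h1 h2 => exact ⟨_, _, _, _, rfl, rfl, h1, h2⟩

lemma wtc_split : ∀ (ι₁ : Coll) {Γ : Ctx} {M ι₂ n}, WTC Γ M (ι₁ ++ ι₂) n →
    ∃ Γ₁ Γ₂ n₁ n₂, Γ = ctxAdd Γ₁ Γ₂ ∧ n = n₁ + n₂ ∧ WTC Γ₁ M ι₁ n₁ ∧ WTC Γ₂ M ι₂ n₂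
  | [], Γ, M, ι₂, n, h => ⟨emptyCtx, Γ, 0, n, rfl, (Nat.zero_add n).symm, WTC.nil, h⟩
  | t :: ts, Γ, M, ι₂, n, h => by
    obtain ⟨Γa, Γb, na, nb, rfl, rfl, h1, h2⟩ := wtc_cons_inv h
    obtain ⟨Γ₁, Γ₂, n₁, n₂, rfl, rfl, hA, hB⟩ := wtc_split ts h2
    exact ⟨ctxAdd Γa Γ₁, Γ₂, na + n₁, n₂,
      funext fun y => (List.append_assoc _ _ _).symm, by omega, WTC.cons h1 hA, hB⟩

lemma wtc_split_empty {M ι₁ ι₂ n} (h : WTC emptyCtx M (ι₁ ++ ι₂) n) :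
    ∃ n₁ n₂, n = n₁ + n₂ ∧ WTC emptyCtx M ι₁ n₁ ∧ WTC emptyCtx M ι₂ n₂ := by
  obtain ⟨Γ₁, Γ₂, n₁, n₂, hΓ, rfl, h1, h2⟩ := wtc_split ι₁ h
  obtain ⟨rfl, rfl⟩ := ctxAdd_eq_empty hΓ.symm
  exact ⟨n₁, n₂, rfl, h1, h2⟩

lemma wtc_cons_empty_inv {M t ts n} (h : WTC emptyCtx M (t :: ts) n) :
    ∃ n₁ n₂, n = n₁ + n₂ ∧ WT emptyCtx M t n₁ ∧ WTC emptyCtx M ts n₂ := by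
  obtain ⟨Γ₁, Γ₂, n₁, n₂, hΓ, rfl, h1, h2⟩ := wtc_cons_inv h
  obtain ⟨rfl, rfl⟩ := ctxAdd_eq_empty hΓ.symm
  exact ⟨n₁, n₂, rfl, h1, h2⟩

/-! ### Substitution lemma -/

lemma substB_aux {P : Tm}
    (HA : ∀ {Γ : Ctx} {t n}, WT Γ P t n → ∀ {x N m}, WTC emptyCtx N (Γ x) m →
      WT (Function.update Γ x []) (subst x N P) t (n + m)) :
    ∀ (ι : Coll) (Γ : Ctx) (n : ℕ), WTC Γ P ι n → ∀ (x : ℕ) (N : Tm) (m : ℕ), WTC emptyCtx N (Γ x) m →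
      WTC (Function.update Γ x []) (subst x N P) ι (n + m)
  | [] => by
    intro Γ n h x N m hc
    obtain ⟨rfl, rfl⟩ := wtc_nil_inv h
    obtain ⟨-, rfl⟩ := wtc_nil_inv hc
    exact WTC.nil.cast (funext fun y => by
      by_cases hy : y = x <;> simp [Function.update, hy, emptyCtx]) rfl rfl
  | t :: ts => by
    intro Γ n h x N m hc
    obtain ⟨Γ₁, Γ₂, n₁, n₂, rfl, rfl, h1, h2⟩ := wtc_cons_inv h
    have hc' : WTC emptyCtx N (Γ₁ x ++ Γ₂ x) m := hc
    obtain ⟨m₁, m₂, rfl, hc1, hc2⟩ := wtc_split_empty hc'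
    have hA := HA h1 hc1
    have hB := substB_aux (P := P) @HA ts _ _ h2 _ _ _ hc2
    exact (WTC.cons hA hB).cast
      (funext fun y => by
        by_cases hy : y = x <;> simp [Function.update, ctxAdd, hy])
      rfl (by omega)

theorem substA : ∀ (M : Tm) {Γ : Ctx} {t n}, WT Γ M t n →
    ∀ {x N m}, WTC emptyCtx N (Γ x) m →
    WT (Function.update Γ x []) (subst x N M) t (n + m) := by
  intro M
  induction M with
  | var y =>
    intro Γ t n h x N m hc
    cases h
    by_cases hxy : x = y
    · subst hxy
      have hsub : subst x N (Tm.var x) = N := by simp [subst]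
      rw [hsub]
      have hc' : WTC emptyCtx N [t] m := by
        have hs : singleCtx x [t] x = [t] := by simp [singleCtx]
        rw [hs] at hc; exact hc
      obtain ⟨n₁, n₂, rfl, h1, h2⟩ := wtc_cons_empty_inv hc'
      obtain ⟨-, rfl⟩ := wtc_nil_inv h2
      refine h1.cast (funext fun z => ?_) rfl (by omega)
      by_cases hz : z = x <;> simp [Function.update, singleCtx, emptyCtx, hz]
    · have : singleCtx y [t] x = [] := by simp [singleCtx, hxy]
      rw [this] at hc
      obtain ⟨-, rfl⟩ := wtc_nil_inv hc
      have : subst x N (Tm.var y) = Tm.var y := by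
        simp [subst, Ne.symm hxy]
      rw [this]
      exact WT.var.cast (funext fun z => by
        by_cases hz : z = x <;> simp [Function.update, singleCtx, hz, hxy, emptyCtx]) rfl rfl
  | pop a y M' IH =>
    intro Γ t n h x N m hc
    cases h with
    | abs h' =>
      rename_i Γ₀ κ μ n₀
      by_cases hxy : x = y
      · subst hxy
        have hc' : WTC emptyCtx N [] m := by
          have : Function.update Γ₀ x ([] : Coll) x = [] := by simp
          rw [this] at hc; exact hc
        obtain ⟨-, rfl⟩ := wtc_nil_inv hc'
        have hsub : subst x N (Tm.pop a x M') = Tm.pop a x M' := by simp [subst]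
        rw [hsub]
        exact (WT.abs h').cast (Function.update_idem _ _ _).symm rfl (by omega)
      · have hc' : WTC emptyCtx N (Γ₀ x) m := by
          rwa [Function.update_of_ne hxy] at hc
        have hsub : subst x N (Tm.pop a y M') = Tm.pop a y (subst x N M') := by
          simp [subst, Ne.symm hxy]
        rw [hsub]
        have := WT.abs (a := a) (x := y) (IH h' hc')
        refine this.cast ?_ ?_ (by omega)
        · exact Function.update_comm hxy _ _ _
        · rw [Function.update_of_ne (Ne.symm hxy)]
  | push P a M' IHP IHM =>
    intro Γ t n h x N m hc
    cases h with
    | app hP hM =>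
      rename_i ι' n₁ Δ κ μ n₂
      rename_i Γ₁
      have hc' : WTC emptyCtx N (Γ₁ x ++ Δ x) m := hc
      obtain ⟨m₁, m₂, rfl, hc1, hc2⟩ := wtc_split_empty hc'
      have h1 := substB_aux (P := P) @IHP ι' _ _ hP _ _ _ hc1
      have h2 := IHM hM hc2
      refine (WT.app h1 h2).cast (funext fun y => ?_) rfl (by omega)
      by_cases hy : y = x <;> simp [Function.update, ctxAdd, hy]
  | skip =>
    intro Γ t n h x N m hc
    cases h
    obtain ⟨-, rfl⟩ := wtc_nil_inv hc
    exact WT.unit.cast (funext fun y => by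
      by_cases hy : y = x <;> simp [Function.update, emptyCtx, hy]) rfl rfl
  | seq M₁ M₂ IH1 IH2 =>
    intro Γ t n h x N m hc
    cases h with
    | seq h1 h2 =>
      rename_i Γ₁ ι κ n₁ Δ μ n₂
      have hc' : WTC emptyCtx N (Γ₁ x ++ Δ x) m := hc
      obtain ⟨m₁, m₂, rfl, hc1, hc2⟩ := wtc_split_empty hc'
      refine (WT.seq (IH1 h1 hc1) (IH2 h2 hc2)).cast (funext fun y => ?_) rfl (by omega)
      by_cases hy : y = x <;> simp [Function.update, ctxAdd, hy]



lemma WStk.cast_wstk {L ι n n'} (h : WStk L ι n) (hn : n = n') : WStk L ι n' := hn ▸ h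

/-! ### Machine lemmas -/

lemma pushMem_inj {S S' : Mem} {a N N'} (h : pushMem S a N = pushMem S' a N') :
    N = N' ∧ S = S' := by
  have ha := congrFun h a
  simp only [pushMem, Function.update_self, List.cons.injEq] at ha
  obtain ⟨hN, hTail⟩ := ha
  refine ⟨hN, funext fun b => ?_⟩
  by_cases hb : b = a
  · subst hb; exact hTail
  · have hb' := congrFun h b
    simpa [pushMem, Function.update_of_ne hb] using hb'

lemma mem_eq_push {S : Mem} {a N L} (h : S a = N :: L) :
    S = pushMem (Function.update S a L) a N := by
  funext b
  by_cases hb : b = a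
  · subst hb; simp [pushMem, h]
  · simp [pushMem, Function.update_of_ne hb]

lemma eval_pos {S M k T} (h : Eval S M k T) : 1 ≤ k := by
  cases h <;> omega

lemma eval_skip_inv {S k T} (h : Eval S Tm.skip k T) : T = S ∧ k = 1 := by
  cases h; exact ⟨rfl, rfl⟩

lemma eval_seq_inv {S M N k T} (h : Eval S (Tm.seq M N) k T) :
    ∃ U m n, Eval S M m U ∧ Eval U N n T ∧ k = m + n + 1 := by
  cases h with
  | seq h1 h2 => exact ⟨_, _, _, h1, h2, rfl⟩

lemma eval_push_inv {S N a M k T} (h : Eval S (Tm.push N a M) k T) :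
    ∃ n, Eval (pushMem S a N) M n T ∧ k = n + 1 := by
  cases h with
  | push h1 => exact ⟨_, h1, rfl⟩

lemma eval_pop_inv {S₀ a x M k T} (h : Eval S₀ (Tm.pop a x M) k T) :
    ∃ S N n, S₀ = pushMem S a N ∧ Eval S (subst x N M) n T ∧ k = n + 1 := by
  cases h with
  | pop h1 => exact ⟨_, _, _, rfl, h1, rfl⟩

lemma eval_det_FMC {S M n T} (h : Eval S M n T) :
    ∀ {n' T'}, Eval S M n' T' → T = T' := by
  induction h with
  | skip => intro n' T' h'; exact (eval_skip_inv h').1.symm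
  | seq h1 h2 IH1 IH2 =>
    intro n' T' h'
    obtain ⟨U, m', k', e1, e2, rfl⟩ := eval_seq_inv h'
    have := IH1 e1; subst this
    exact IH2 e2
  | push h1 IH =>
    intro n' T' h'
    obtain ⟨k', e, rfl⟩ := eval_push_inv h'
    exact IH e
  | pop h1 IH =>
    intro n' T' h'
    obtain ⟨S₂, N₂, k', hEq, e, rfl⟩ := eval_pop_inv h'
    obtain ⟨hN, hS⟩ := pushMem_inj hEq
    subst hN; subst hS
    exact IH e

/-! ### Memory typing lemmas -/

lemma wstk_nil_inv {L n} (h : WStk L [] n) : L = [] ∧ n = 0 := by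
  cases h; exact ⟨rfl, rfl⟩

lemma wstk_cons_inv {L ν ι n} (h : WStk L (ν :: ι) n) :
    ∃ N L' q r, L = N :: L' ∧ WTC emptyCtx N ν q ∧ WStk L' ι r ∧ n = q + r := by
  cases h with
  | cons h1 h2 => exact ⟨_, _, _, _, rfl, h1, h2, rfl⟩

lemma WM_empty : WM emptyMem emptyMT 0 :=
  ⟨fun _ => 0, fun _ => WStk.nil, ∅, fun _ _ => rfl, by simp⟩

lemma WM_push {S ι p} (h : WM S ι p) {a N ν q} (hN : WTC emptyCtx N ν q) :
    WM (pushMem S a N) (consAt a ν ι) (p + q) := by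
  obtain ⟨w, hw, l, hl, rfl⟩ := h
  refine ⟨Function.update w a (w a + q), fun b => ?_, insert a l, fun b hb => ?_, ?_⟩
  · by_cases hb : b = a
    · subst hb
      have h1 : pushMem S b N b = N :: S b := by simp [pushMem]
      have h2 : consAt b ν ι b = ν :: ι b := by simp [consAt]
      rw [h1, h2, Function.update_self]
      exact (WStk.cons hN (hw b)).cast_wstk (by omega)
    · rw [Function.update_of_ne hb]
      have h1 : pushMem S a N b = S b := by simp [pushMem, Function.update_of_ne hb]
      have h2 : consAt a ν ι b = ι b := by simp [consAt, hb]
      rw [h1, h2]; exact hw b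
  · have hbl : b ∉ l := fun c => hb (Finset.mem_insert_of_mem c)
    have hba : b ≠ a := fun c => hb (c ▸ Finset.mem_insert_self a l)
    rw [Function.update_of_ne hba]; exact hl b hbl
  · by_cases hal : a ∈ l
    · rw [Finset.insert_eq_self.mpr hal]
      rw [Finset.sum_update_of_mem hal, ← Finset.erase_eq]
      have := Finset.add_sum_erase l w hal
      omega
    · rw [Finset.sum_insert hal, Function.update_self]
      have h0 : w a = 0 := hl a hal
      have : ∑ b ∈ l, Function.update w a (w a + q) b = ∑ b ∈ l, w b :=
        Finset.sum_congr rfl fun b hb =>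
          Function.update_of_ne (ne_of_mem_of_not_mem hb hal) _ _
      omega

lemma WM_pop {S ι p a ν κ'} (h : WM S ι p) (hι : ι a = ν :: κ') :
    ∃ N L q r, S a = N :: L ∧ WTC emptyCtx N ν q ∧
      WM (Function.update S a L) (Function.update ι a κ') r ∧ p = q + r := by
  obtain ⟨w, hw, l, hl, rfl⟩ := h
  have hwa := hw a
  rw [hι] at hwa
  obtain ⟨N, L, q, r0, hSa, hN, hL, hwa_eq⟩ := wstk_cons_inv hwa
  refine ⟨N, L, q, ∑ b ∈ insert a l, Function.update w a r0 b, hSa, hN,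
    ⟨Function.update w a r0, fun b => ?_, insert a l, fun b hb => ?_, rfl⟩, ?_⟩
  · by_cases hb : b = a
    · subst hb; simp only [Function.update_self]; exact hL
    · rw [Function.update_of_ne hb, Function.update_of_ne hb, Function.update_of_ne hb]
      exact hw b
  · have hbl : b ∉ l := fun c => hb (Finset.mem_insert_of_mem c)
    have hba : b ≠ a := fun c => hb (c ▸ Finset.mem_insert_self a l)
    rw [Function.update_of_ne hba]; exact hl b hbl
  · have hmem : a ∈ insert a l := Finset.mem_insert_self a l
    have e1 : ∑ b ∈ insert a l, Function.update w a r0 b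
        = r0 + ∑ b ∈ (insert a l).erase a, w b := by
      rw [Finset.sum_update_of_mem hmem, ← Finset.erase_eq]
    have e2 : w a + ∑ b ∈ (insert a l).erase a, w b = ∑ b ∈ insert a l, w b :=
      Finset.add_sum_erase _ w hmem
    have e3 : ∑ b ∈ insert a l, w b = ∑ b ∈ l, w b := by
      by_cases hal : a ∈ l
      · rw [Finset.insert_eq_self.mpr hal]
      · rw [Finset.sum_insert hal, hl a hal, Nat.zero_add]
    omega

/-! ### Soundness of typing for machine evaluation -/

lemma consAt_update {a : ℕ} {ν : Coll} {κ : MemT} :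
    Function.update (consAt a ν κ) a (κ a) = κ := by
  funext b
  by_cases hb : b = a
  · subst hb; simp
  · rw [Function.update_of_ne hb]; simp [consAt, hb]

theorem eval_sound : ∀ (W : ℕ) {Γ : Ctx} {S ι κ M p m}, p + m ≤ W → Γ = emptyCtx →
    WM S ι p → WT Γ M (Ty.arr ι κ) m →
    ∃ T q k, Eval S M k T ∧ WM T κ q ∧ q + k = p + m := by
  intro W
  induction W using Nat.strong_induction_on with
  | _ W IH =>
    intro Γ S ι κ M p m hle hΓ hS hM
    cases hM with
    | var =>
      exfalso
      rename_i x
      have := congrFun hΓ x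
      simp [singleCtx, emptyCtx] at this
    | abs h' =>
      rename_i Γ₀ M₀ κ₀ n₀ x a
      obtain ⟨N, L, q, r, hSa, hN, hS', hpqr⟩ :=
        WM_pop hS (show consAt a (Γ₀ x) κ₀ a = Γ₀ x :: κ₀ a by simp [consAt])
      rw [consAt_update] at hS'
      have hsub : WT emptyCtx (subst x N M₀) (Ty.arr κ₀ κ) (n₀ + q) :=
        (substA M₀ h' hN).cast hΓ rfl rfl
      have hlt : r + (n₀ + q) < W := by omega
      obtain ⟨T, q', k, hEv, hT, hsum⟩ := IH _ hlt (le_refl _) rfl hS' hsub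
      refine ⟨T, q', k + 1, ?_, hT, by omega⟩
      rw [mem_eq_push hSa]
      exact Eval.pop hEv
    | app hP hM' =>
      rename_i Γ₁ N ι' n₁ Δ M₀ a n₂
      obtain ⟨hΓ₁, hΔ⟩ := ctxAdd_eq_empty hΓ
      subst hΓ₁
      have hS' := WM_push (a := a) hS hP
      have hlt : (p + n₁) + n₂ < W := by omega
      obtain ⟨T, q, k, hEv, hT, hsum⟩ := IH _ hlt (le_refl _) hΔ hS' hM'
      exact ⟨T, q, k + 1, Eval.push hEv, hT, by omega⟩
    | unit => exact ⟨S, p, 1, Eval.skip, hS, rfl⟩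
    | seq h1 h2 =>
      rename_i Γ₁ M₁ κm n₁ Δ M₂ n₂
      obtain ⟨hΓ₁, hΔ⟩ := ctxAdd_eq_empty hΓ
      have hlt1 : p + n₁ < W := by omega
      obtain ⟨T₁, q₁, k₁, e1, hT1, hs1⟩ := IH _ hlt1 (le_refl _) hΓ₁ hS h1
      have hk1 := eval_pos e1
      have hlt2 : q₁ + n₂ < W := by omega
      obtain ⟨T, q₂, k₂, e2, hT2, hs2⟩ := IH _ hlt2 (le_refl _) hΔ hT1 h2
      exact ⟨T, q₂, k₁ + k₂ + 1, Eval.seq e1 e2, hT2, by omega⟩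
end NoInhab

/-- Not all quantitative types are inhabited: the type
ε ⇒ [ε⇒ε, ε⇒[ε⇒ε]] has no inhabitant in the empty context. -/
theorem no_type_inhabitation :
    ∀ (M : Tm) (n : ℕ), ¬ WT emptyCtx M tyUninhabited n := by
  intro M n hM
  have hM' : WT emptyCtx M
      (Ty.arr emptyMT (fun a => if a = 0 then [[tyE, tyE2]] else [])) n := hM
  obtain ⟨T, q, k, hEv, hT, -⟩ := eval_sound (0 + n) (le_refl _) rfl WM_empty hM'
  obtain ⟨w, hw, -⟩ := hT
  have h0 : WStk (T 0) [[tyE, tyE2]] (w 0) := by simpa using hw 0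
  obtain ⟨N, L, q₀, r₀, hT0, hN, -, -⟩ := wstk_cons_inv h0
  obtain ⟨n₁, n₂, -, hN1, hN2⟩ := wtc_cons_empty_inv hN
  obtain ⟨n₂', n₃, -, hN2', -⟩ := wtc_cons_empty_inv hN2
  have hE1 : WT emptyCtx N (Ty.arr emptyMT emptyMT) n₁ := hN1
  have hE2 : WT emptyCtx N
      (Ty.arr emptyMT (fun a => if a = 0 then [[tyE]] else [])) n₂' := hN2'
  obtain ⟨T₁, q₁, k₁, e1, hT1, -⟩ := eval_sound (0 + n₁) (le_refl _) rfl WM_empty hE1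
  obtain ⟨T₂, q₂, k₂, e2, hT2, -⟩ := eval_sound (0 + n₂') (le_refl _) rfl WM_empty hE2
  have hTT : T₁ = T₂ := eval_det_FMC e1 e2
  obtain ⟨w₁, hw₁, -⟩ := hT1
  obtain ⟨w₂, hw₂, -⟩ := hT2
  obtain ⟨hT10, -⟩ := wstk_nil_inv (hw₁ 0)
  have hB : WStk (T₂ 0) [[tyE]] (w₂ 0) := by simpa using hw₂ 0
  obtain ⟨N', L', q', r', hT20, -, -, -⟩ := wstk_cons_inv hB
  rw [hTT, hT20] at hT10
  exact List.cons_ne_nil _ _ hT10
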